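/- arXiv:1804.07630 — 11 statements merged into one kernel-verified Lean document; each statement's English description precedes it below -/
import Mathlib

section
/- Let (G, X, 0) be an expansive pointed dynamical system with expansivity constant Δ > 0, let Y be a metric space, and let f : X → Y be a continuous function. Then for every ε > 0 and every δ with 0 < δ ≤ Δ, there exists a finite set N ⊆ G such that for all x, y ∈ X, if d(g·x, g·y) ≤ δ for all g ∈ N, then d_Y(f(x), f(y)) < ε. -/
/-- In an expansive pointed dynamical system `(G, X, 0)` with expansivity
constant `Δ`, for every continuous `f : X → Y`, every `ε > 0` and every `0 < δ ≤ Δ`,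
there is a finite set `N ⊆ G` such that points that are `δ`-close along `N` have
`f`-images `ε`-close. -/
theorem statement0 {G X Y : Type} [Group G] [MetricSpace X] [CompactSpace X]
    [MulAction G X] [MetricSpace Y]
    (hcont : ∀ g : G, Continuous fun x : X => g • x)
    (x₀ : X) (hx₀ : ∀ g : G, g • x₀ = x₀)
    (Δ : ℝ) (hΔ : 0 < Δ)
    (hexp : ∀ x y : X, (∀ g : G, dist (g • x) (g • y) ≤ Δ) → x = y)
    (f : X → Y) (hf : Continuous f)
    (ε : ℝ) (hε : 0 < ε) (δ : ℝ) (hδ : 0 < δ) (hδΔ : δ ≤ Δ) :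
    ∃ N : Finset G, ∀ x y : X,
      (∀ g ∈ N, dist (g • x) (g • y) ≤ δ) → dist (f x) (f y) < ε := by
  classical
  by_contra h
  push_neg at h
  -- Define the family of closed sets
  set Z : Finset G → Set (X × X) := fun N =>
    {p : X × X | (∀ g ∈ N, dist (g • p.1) (g • p.2) ≤ δ) ∧ ε ≤ dist (f p.1) (f p.2)} with hZ
  have hZclosed : ∀ N, IsClosed (Z N) := by
    intro N
    have heq : Z N = (⋂ g ∈ (N : Set G),
        {p : X × X | dist (g • p.1) (g • p.2) ≤ δ}) ∩
        {p : X × X | ε ≤ dist (f p.1) (f p.2)} := by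
      ext p; simp [hZ]
    rw [heq]
    apply IsClosed.inter
    · refine isClosed_biInter fun g _ => ?_
      exact isClosed_le (Continuous.dist ((hcont g).comp continuous_fst)
        ((hcont g).comp continuous_snd)) continuous_const
    · exact isClosed_le continuous_const
        (Continuous.dist (hf.comp continuous_fst) (hf.comp continuous_snd))
  have hZne : ∀ N, (Z N).Nonempty := by
    intro N
    obtain ⟨x, y, hxy, hd⟩ := h N
    exact ⟨(x, y), hxy, hd⟩
  have hdir : Directed (· ⊇ ·) Z := by
    intro N M
    refine ⟨N ∪ M, ?_, ?_⟩ <;> intro p hp <;>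
      exact ⟨fun g hg => hp.1 g (Finset.mem_union.2 (by tauto)), hp.2⟩
  obtain ⟨p, hp⟩ := IsCompact.nonempty_iInter_of_directed_nonempty_isCompact_isClosed
    Z hdir hZne (fun N => (hZclosed N).isCompact) hZclosed
  simp only [Set.mem_iInter] at hp
  have hall : ∀ g : G, dist (g • p.1) (g • p.2) ≤ Δ := by
    intro g
    exact le_trans ((hp {g}).1 g (Finset.mem_singleton_self g)) hδΔ
  have := hexp p.1 p.2 hall
  have hd := (hp ∅).2
  rw [this] at hd
  simp at hd
  linarith
end

section
/- Let (G, X, 0) be an expansive pointed dynamical system with expansivity constant Δ > 0. For each finite set F ⊆ G and each δ with 0 < δ ≤ Δ/2, the set Y = { x ∈ X : Θ(δ, x) ⊆ F } is finite, where Θ(δ, x) = { g ∈ G : d(g·x, 0) > δ } is the δ-shadow of x. -/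
/-- In an expansive pointed dynamical system `(G, X, 0)` with expansivity
constant `Δ`, for every finite `F ⊆ G` and `0 < δ ≤ Δ/2`, the set of points whose
`δ`-shadow `{g | dist (g • x) 0 > δ}` is contained in `F` is finite. -/
theorem statement1 {G X : Type} [Group G] [MetricSpace X] [CompactSpace X]
    [MulAction G X]
    (hcont : ∀ g : G, Continuous fun x : X => g • x)
    (x₀ : X) (hx₀ : ∀ g : G, g • x₀ = x₀)
    (Δ : ℝ) (hΔ : 0 < Δ)
    (hexp : ∀ x y : X, (∀ g : G, dist (g • x) (g • y) ≤ Δ) → x = y)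
    (F : Finset G) (δ : ℝ) (hδ : 0 < δ) (hδΔ : δ ≤ Δ / 2) :
    {x : X | ∀ g : G, δ < dist (g • x) x₀ → g ∈ F}.Finite := by
  set Y : Set X := {x : X | ∀ g : G, δ < dist (g • x) x₀ → g ∈ F} with hY
  -- reformulation of membership
  have hmem : ∀ x ∈ Y, ∀ g : G, g ∉ F → dist (g • x) x₀ ≤ δ := by
    intro x hx g hg
    by_contra h
    exact hg (hx g (lt_of_not_ge h))
  -- separation: distinct points of Y are Δ-separated by some g ∈ F
  have hsep : ∀ x ∈ Y, ∀ y ∈ Y, x ≠ y → ∃ g ∈ F, Δ < dist (g • x) (g • y) := by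
    intro x hx y hy hxy
    by_contra h
    push_neg at h
    apply hxy
    apply hexp
    intro g
    by_cases hg : g ∈ F
    · exact h g hg
    · calc dist (g • x) (g • y) ≤ dist (g • x) x₀ + dist x₀ (g • y) := dist_triangle _ _ _
        _ ≤ δ + δ := by
            have h1 := hmem x hx g hg
            have h2 := hmem y hy g hg
            rw [dist_comm] at h2
            linarith
        _ ≤ Δ := by linarith
  -- Y is closed, hence compact
  have hclosed : IsClosed Y := by
    have : Y = ⋂ g ∈ (Fᶜ : Set G), {x : X | dist (g • x) x₀ ≤ δ} := by
      ext x
      simp only [Set.mem_iInter, Set.mem_setOf_eq, Set.mem_compl_iff, Finset.mem_coe]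
      constructor
      · intro hx g hg
        exact hmem x hx g hg
      · intro h g hg
        by_contra hgF
        exact absurd hg (not_lt.mpr (h g hgF))
    rw [this]
    exact isClosed_biInter fun g _ =>
      isClosed_le ((hcont g).dist continuous_const) continuous_const
  have hcompact : IsCompact Y := hclosed.isCompact
  -- isolating neighborhoods
  set U : X → Set X := fun x => ⋂ g ∈ F, (fun y : X => g • y) ⁻¹' Metric.ball (g • x) Δ
    with hU
  have hUopen : ∀ x, IsOpen (U x) :=
    fun x => isOpen_biInter_finset fun g _ => (Metric.isOpen_ball).preimage (hcont g)
  have hxU : ∀ x, x ∈ U x := by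
    intro x
    simp only [hU, Set.mem_iInter, Set.mem_preimage, Metric.mem_ball]
    intro g _
    simpa using hΔ
  have hUY : ∀ x ∈ Y, ∀ y ∈ Y, y ∈ U x → y = x := by
    intro x hx y hy hyU
    by_contra hne
    obtain ⟨g, hgF, hgd⟩ := hsep x hx y hy (Ne.symm hne)
    have : dist (g • y) (g • x) < Δ := by
      have := Set.mem_iInter₂.mp hyU g hgF
      simpa [Metric.mem_ball] using this
    rw [dist_comm] at hgd
    linarith
  -- finite subcover
  have hcover : Y ⊆ ⋃ x ∈ Y, U x := fun y hy =>
    Set.mem_biUnion hy (hxU y)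
  obtain ⟨t, htY, htfin, htcover⟩ :=
    hcompact.elim_finite_subcover_image (fun x _ => hUopen x) hcover
  have : Y ⊆ t := by
    intro y hy
    obtain ⟨x, hxt, hyUx⟩ := Set.mem_iUnion₂.mp (htcover hy)
    have := hUY x (htY hxt) y hy hyUx
    rwa [this]
  exact htfin.subset this
end

section
/- Let (G, X, 0) be an expansive pointed dynamical system, let f : X → X be an endomorphism, and let Y ⊆ X be a closed G-invariant subset. If f is weakly nilpotent on Y, i.e. for every y ∈ Y there exists n ∈ ℕ with fⁿ(y) = 0, then f is nilpotent on Y, i.e. there exists n ∈ ℕ such that fⁿ(y) = 0 for all y ∈ Y. -/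
/-- In an expansive pointed dynamical system `(G, X, 0)`, if an
endomorphism `f` is weakly nilpotent on a closed `G`-invariant subset `Y ⊆ X`,
then it is nilpotent on `Y`. -/
theorem statement2 {G X : Type} [Group G] [MetricSpace X] [CompactSpace X]
    [MulAction G X]
    (hcont : ∀ g : G, Continuous fun x : X => g • x)
    (x₀ : X) (hx₀ : ∀ g : G, g • x₀ = x₀)
    (Δ : ℝ) (hΔ : 0 < Δ)
    (hexp : ∀ x y : X, (∀ g : G, dist (g • x) (g • y) ≤ Δ) → x = y)
    (f : X → X) (hf : Continuous f) (hf₀ : f x₀ = x₀)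
    (hfeq : ∀ (g : G) (x : X), f (g • x) = g • f x)
    (Y : Set X) (hYclosed : IsClosed Y)
    (hYinv : ∀ (g : G), ∀ y ∈ Y, g • y ∈ Y)
    (hweak : ∀ y ∈ Y, ∃ n : ℕ, f^[n] y = x₀) :
    ∃ n : ℕ, ∀ y ∈ Y, f^[n] y = x₀ := by
  classical
  by_contra hcon
  push_neg at hcon
  -- basic iterate facts
  have hfix : ∀ n : ℕ, f^[n] x₀ = x₀ := fun n => Function.iterate_fixed hf₀ n
  have hcomm : ∀ (n : ℕ) (g : G) (x : X), f^[n] (g • x) = g • f^[n] x := by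
    intro n g x
    induction n with
    | zero => simp
    | succ n ih =>
        rw [Function.iterate_succ_apply', ih, hfeq, Function.iterate_succ_apply']
  have hkey : ∀ x : X, (∀ g : G, dist (g • x) x₀ ≤ Δ) → x = x₀ := by
    intro x h
    exact hexp x x₀ (fun g => by rw [hx₀ g]; exact h g)
  -- the sets Z n
  set Z : ℕ → Set X := fun n => Y ∩ (f^[n]) ⁻¹' {x₀} with hZdef
  have hZmem : ∀ (n : ℕ) (y : X), y ∈ Z n ↔ y ∈ Y ∧ f^[n] y = x₀ := by
    intro n y; simp [hZdef]
  have hZmono : ∀ {m n : ℕ}, m ≤ n → Z m ⊆ Z n := by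
    intro m n hmn y hy
    rw [hZmem] at hy ⊢
    obtain ⟨k, rfl⟩ := Nat.exists_eq_add_of_le hmn
    refine ⟨hy.1, ?_⟩
    rw [Nat.add_comm, Function.iterate_add_apply, hy.2, hfix]
  have hZclosed : ∀ n, IsClosed (Z n) :=
    fun n => hYclosed.inter (isClosed_singleton.preimage (hf.iterate n))
  have hZinv : ∀ (n : ℕ) (g : G) (y : X), y ∈ Z n → g • y ∈ Z n := by
    intro n g y hy
    rw [hZmem] at hy ⊢
    exact ⟨hYinv g y hy.1, by rw [hcomm, hy.2, hx₀]⟩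
  -- the family of "bad" sets
  set S : Set (Set X) := {C | C ⊆ Y ∧ IsClosed C ∧ (∀ (g : G) (y : X), y ∈ C → g • y ∈ C) ∧
      ∀ n : ℕ, ¬ C ⊆ Z n} with hSdef
  have hYS : Y ∈ S := by
    refine ⟨Set.Subset.rfl, hYclosed, fun g y hy => hYinv g y hy, fun n hsub => ?_⟩
    obtain ⟨y, hyY, hyne⟩ := hcon n
    exact hyne ((hZmem n y).mp (hsub hyY)).2
  -- Zorn: a minimal bad set exists
  have hzorn : ∀ c ⊆ S, IsChain (· ⊆ ·) c → ∃ lb ∈ S, ∀ s ∈ c, lb ⊆ s := by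
    intro c hcS hchain
    rcases Set.eq_empty_or_nonempty c with rfl | ⟨C₀, hC₀⟩
    · exact ⟨Y, hYS, fun s hs => absurd hs (Set.notMem_empty s)⟩
    refine ⟨⋂₀ c, ?_, fun s hs => Set.sInter_subset_of_mem hs⟩
    refine ⟨(Set.sInter_subset_of_mem hC₀).trans (hcS hC₀).1,
      isClosed_sInter (fun s hs => (hcS hs).2.1),
      fun g y hy => Set.mem_sInter.mpr (fun s hs => (hcS hs).2.2.1 g y (Set.mem_sInter.mp hy s hs)),
      ?_⟩
    intro n hsub
    -- the intersection is inside the open set f^[n] ⁻¹' ball x₀ Δ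
    have hVopen : IsOpen ((f^[n]) ⁻¹' Metric.ball x₀ Δ) :=
      Metric.isOpen_ball.preimage (hf.iterate n)
    haveI : Nonempty ↥c := ⟨⟨C₀, hC₀⟩⟩
    have hdir : Directed (· ⊇ ·) (fun s : ↥c => (s : Set X)) := by
      intro a b
      rcases hchain.total a.2 b.2 with hab | hba
      · exact ⟨a, Set.Subset.rfl, hab⟩
      · exact ⟨b, hba, Set.Subset.rfl⟩
    have hcpct : ∀ s : ↥c, IsCompact (s : Set X) :=
      fun s => (hcS s.2).2.1.isCompact
    have hicap : (⋂ s : ↥c, (s : Set X)) = ⋂₀ c := by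
      ext x; simp [Set.mem_sInter]
    obtain ⟨s, hsV⟩ := exists_subset_nhds_of_isCompact hdir hcpct
      (U := (f^[n]) ⁻¹' Metric.ball x₀ Δ) (fun x hx => by
        rw [hicap] at hx
        have hx' := ((hZmem n x).mp (hsub hx)).2
        refine hVopen.mem_nhds ?_
        simp only [Set.mem_preimage, hx']
        exact Metric.mem_ball_self hΔ)
    refine (hcS s.2).2.2.2 n ?_
    intro y hy
    have hyY : y ∈ Y := (hcS s.2).1 hy
    refine (hZmem n y).mpr ⟨hyY, hkey _ (fun g => ?_)⟩
    have hg : g • y ∈ (s : Set X) := (hcS s.2).2.2.1 g y hy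
    have := hsV hg
    simp only [Set.mem_preimage, Metric.mem_ball] at this
    rw [hcomm n g y] at this
    exact this.le
  obtain ⟨C, hCmin⟩ := zorn_superset S hzorn
  obtain ⟨hCY, hCcl, hCinv, hCnot⟩ := hCmin.prop
  -- C is nonempty compact
  have hCcomp : IsCompact C := hCcl.isCompact
  have hCne : C.Nonempty := by
    rcases Set.eq_empty_or_nonempty C with rfl | h
    · exact absurd (Set.empty_subset _) (hCnot 0)
    · exact h
  -- Baire category on the compact metric space C
  haveI : CompactSpace ↥C := isCompact_iff_compactSpace.mp hCcomp
  haveI : Nonempty ↥C := hCne.to_subtype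
  have hcover : (⋃ n : ℕ, (Subtype.val ⁻¹' Z n : Set ↥C)) = Set.univ := by
    ext y
    simp only [Set.mem_iUnion, Set.mem_univ, iff_true, Set.mem_preimage]
    obtain ⟨n, hn⟩ := hweak y (hCY y.2)
    exact ⟨n, (hZmem n y).mpr ⟨hCY y.2, hn⟩⟩
  have hclosed' : ∀ n, IsClosed (Subtype.val ⁻¹' Z n : Set ↥C) :=
    fun n => (hZclosed n).preimage continuous_subtype_val
  obtain ⟨n, x, hx⟩ := nonempty_interior_of_iUnion_of_closed hclosed' hcover
  obtain ⟨t, hts, htop, hxt⟩ := mem_interior.mp hx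
  obtain ⟨U, hUopen, hUt⟩ := isOpen_induced_iff.mp htop
  -- U ∩ C ⊆ Z n and x ∈ U ∩ C
  have hUC : U ∩ C ⊆ Z n := by
    intro y hy
    have : (⟨y, hy.2⟩ : ↥C) ∈ t := by rw [← hUt]; exact hy.1
    exact hts this
  have hxU : (x : X) ∈ U := by
    have : x ∈ (Subtype.val ⁻¹' U : Set ↥C) := by rw [hUt]; exact hxt
    exact this
  -- the open G-invariant set V
  set V : Set X := {x : X | ∃ g : G, g • x ∈ U} with hVdef
  have hVopen : IsOpen V := by
    have : V = ⋃ g : G, (fun x : X => g • x) ⁻¹' U := by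
      ext z; simp [hVdef]
    rw [this]
    exact isOpen_iUnion (fun g => hUopen.preimage (hcont g))
  have hVC : V ∩ C ⊆ Z n := by
    rintro y ⟨⟨g, hg⟩, hyC⟩
    have h2 : g • y ∈ Z n := hUC ⟨hg, hCinv g y hyC⟩
    have h3 : g • f^[n] y = x₀ := by rw [← hcomm]; exact ((hZmem n _).mp h2).2
    refine (hZmem n y).mpr ⟨hCY hyC, ?_⟩
    have : f^[n] y = g⁻¹ • (g • f^[n] y) := (inv_smul_smul g _).symm
    rw [h3, hx₀] at this
    exact this
  -- the complement D
  set D : Set X := C \ V with hDdef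
  have hDcl : IsClosed D := hCcl.sdiff hVopen
  have hDinv : ∀ (g : G) (y : X), y ∈ D → g • y ∈ D := by
    rintro g y ⟨hyC, hyV⟩
    refine ⟨hCinv g y hyC, ?_⟩
    rintro ⟨h, hh⟩
    exact hyV ⟨h * g, by rw [mul_smul]; exact hh⟩
  have hxV : (x : X) ∈ V := ⟨1, by rwa [one_smul]⟩
  by_cases hD : ∃ m : ℕ, D ⊆ Z m
  · obtain ⟨m, hm⟩ := hD
    refine hCnot (max m n) ?_
    intro y hyC
    by_cases hyV : y ∈ V
    · exact hZmono (le_max_right m n) (hVC ⟨hyV, hyC⟩)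
    · exact hZmono (le_max_left m n) (hm ⟨hyC, hyV⟩)
  · push_neg at hD
    have hDS : D ∈ S := ⟨fun y hy => hCY hy.1, hDcl, hDinv, hD⟩
    have hDC : C ⊆ D := hCmin.2 hDS Set.diff_subset
    exact (hDC x.2).2 hxV
end

section
/- Let G be a group generated by a finite set S, and let (G, X, 0) be a pointed dynamical system with the shadowing property. Then (G, X, 0) is 0-gluing. -/
/-- A pointed system `(G, X, x₀)` is `0`-gluing: for every `ε > 0` there are `δ > 0`
and a finite `E ⊆ G` such that every `(δ, E)`-designation `(A_i, p_i)_{i ∈ I}`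
(the `A_i` partition `G`, and every point of the `E`-border of `A_i` sees `p_i`
`δ`-close to `x₀`) has an `ε`-realization. -/
def ZeroGluing (G : Type) [Group G] {X : Type} [MetricSpace X] [MulAction G X]
    (x₀ : X) : Prop :=
  ∀ ε : ℝ, 0 < ε → ∃ δ : ℝ, 0 < δ ∧ ∃ E : Finset G,
    ∀ (I : Type) (A : I → Set G) (p : I → X),
      (∀ g : G, ∃! i : I, g ∈ A i) →
      (∀ i : I, ∀ g ∈ A i, (∃ e ∈ E, e * g ∉ A i) → dist (g • p i) x₀ < δ) →
      ∃ y : X, ∀ i : I, ∀ g ∈ A i, dist (g • y) (g • p i) < ε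

/-- a pointed dynamical system over a finitely generated group with the
shadowing property is `0`-gluing. -/
theorem statement3 {G X : Type} [Group G] [MetricSpace X] [CompactSpace X]
    [MulAction G X]
    (hcont : ∀ g : G, Continuous fun x : X => g • x)
    (x₀ : X) (hx₀ : ∀ g : G, g • x₀ = x₀)
    (S : Finset G) (hS : Subgroup.closure (S : Set G) = ⊤)
    (hshadow : ∀ ε : ℝ, 0 < ε → ∃ δ : ℝ, 0 < δ ∧
      ∀ c : G → X, (∀ (g : G), ∀ s ∈ S, dist (s • c g) (c (s * g)) < δ) →
        ∃ y : X, ∀ g : G, dist (c g) (g • y) < ε) :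
    ZeroGluing G x₀ := by
  classical
  intro ε hε
  obtain ⟨δ, hδ, hsh⟩ := hshadow ε hε
  have key : ∀ T : Finset G, ∃ δ' : ℝ, 0 < δ' ∧
      ∀ s ∈ T, ∀ a : X, dist a x₀ < δ' → dist (s • a) x₀ < δ / 2 := by
    intro T
    induction T using Finset.induction_on with
    | empty => exact ⟨1, one_pos, by simp⟩
    | @insert s T hns ih =>
      obtain ⟨δ', hδ', h'⟩ := ih
      have hc : ContinuousAt (fun a : X => s • a) x₀ := (hcont s).continuousAt
      rw [Metric.continuousAt_iff] at hc
      obtain ⟨δs, hδs, hs⟩ := hc (δ / 2) (by linarith)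
      refine ⟨min δ' δs, lt_min hδ' hδs, ?_⟩
      intro t ht a ha
      rcases Finset.mem_insert.mp ht with rfl | ht
      · have := hs (lt_of_lt_of_le ha (min_le_right _ _))
        rwa [hx₀ t] at this
      · exact h' t ht a (lt_of_lt_of_le ha (min_le_left _ _))
  obtain ⟨δ₀, hδ₀, hkey⟩ := key S
  refine ⟨min δ₀ (δ / 2), lt_min hδ₀ (by linarith), S ∪ S.image (·⁻¹), ?_⟩
  intro I A p huniq hborder
  let idx : G → I := fun g => (huniq g).choose
  have hmem : ∀ g, g ∈ A (idx g) := fun g => (huniq g).choose_spec.1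
  have huni : ∀ g i, g ∈ A i → i = idx g := fun g i h => (huniq g).choose_spec.2 i h
  set c : G → X := fun g => g • p (idx g) with hc
  have hpo : ∀ g : G, ∀ s ∈ S, dist (s • c g) (c (s * g)) < δ := by
    intro g s hs
    by_cases hsg : s * g ∈ A (idx g)
    · have hii : idx (s * g) = idx g := (huni (s * g) (idx g) hsg).symm
      have : s • c g = c (s * g) := by
        simp only [hc, hii, smul_smul]
      rw [this, dist_self]
      exact hδ
    · have h1 : dist (g • p (idx g)) x₀ < min δ₀ (δ / 2) := by
        exact hborder (idx g) g (hmem g) ⟨s, Finset.mem_union_left _ hs, hsg⟩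
      have hg' : g ∉ A (idx (s * g)) := by
        intro hg
        have h := huni g _ hg
        exact hsg (h ▸ hmem (s * g))
      have h2 : dist ((s * g) • p (idx (s * g))) x₀ < min δ₀ (δ / 2) := by
        refine hborder (idx (s * g)) (s * g) (hmem (s * g))
          ⟨s⁻¹, Finset.mem_union_right _ (Finset.mem_image_of_mem _ hs), ?_⟩
        rwa [inv_mul_cancel_left]
      calc dist (s • c g) (c (s * g))
          ≤ dist (s • c g) x₀ + dist x₀ (c (s * g)) := dist_triangle _ _ _
        _ < δ / 2 + δ / 2 := by
            apply add_lt_add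
            · exact hkey s hs _ (lt_of_lt_of_le h1 (min_le_left _ _))
            · rw [dist_comm]
              exact lt_of_lt_of_le h2 (min_le_right _ _)
        _ = δ := by ring
  obtain ⟨y, hy⟩ := hsh c hpo
  refine ⟨y, fun i g hg => ?_⟩
  have hig : i = idx g := huni g i hg
  have h := hy g
  rw [dist_comm]
  simpa [hc, hig] using h
end

section
/- Let (G, X, 0_X) and (G, Y, 0_Y) be pointed dynamical systems over the same group G, and let π : X → Y be a surjective continuous map with π(g·x) = g·π(x) for all g ∈ G, x ∈ X, with π(0_X) = 0_Y, and with π⁻¹(0_Y) = {0_X}. If (G, X, 0_X) is 0-gluing, then so is (G, Y, 0_Y). -/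
/-- the `0`-gluing property passes to factors `π : X → Y` with
`π⁻¹(0_Y) = {0_X}`. -/
theorem statement4 {G X Y : Type} [Group G]
    [MetricSpace X] [CompactSpace X] [MulAction G X]
    [MetricSpace Y] [CompactSpace Y] [MulAction G Y]
    (hcontX : ∀ g : G, Continuous fun x : X => g • x)
    (hcontY : ∀ g : G, Continuous fun y : Y => g • y)
    (x₀ : X) (hx₀ : ∀ g : G, g • x₀ = x₀)
    (y₀ : Y) (hy₀ : ∀ g : G, g • y₀ = y₀)
    (π : X → Y) (hπc : Continuous π) (hπs : Function.Surjective π)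
    (hπeq : ∀ (g : G) (x : X), π (g • x) = g • π x)
    (hπ0 : π x₀ = y₀) (hfib : π ⁻¹' {y₀} = {x₀})
    (hX : ZeroGluing G x₀) :
    ZeroGluing G y₀ := by
  intro ε hε
  obtain ⟨ε', hε', hπu⟩ :=
    Metric.uniformContinuous_iff.mp (CompactSpace.uniformContinuous_of_continuous hπc) ε hε
  obtain ⟨δX, hδX, E, hE⟩ := hX ε' hε'
  have hsep : ∃ δY : ℝ, 0 < δY ∧ ∀ x : X, dist (π x) y₀ < δY → dist x x₀ < δX := by
    by_cases hK : {x : X | δX ≤ dist x x₀}.Nonempty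
    · have hKc : IsCompact {x : X | δX ≤ dist x x₀} :=
        (isClosed_le continuous_const (continuous_id.dist continuous_const)).isCompact
      obtain ⟨xm, hxmK, hmin⟩ :=
        hKc.exists_isMinOn hK ((hπc.dist continuous_const).continuousOn)
      refine ⟨dist (π xm) y₀, ?_, ?_⟩
      · rw [dist_pos]
        intro h
        have : xm ∈ π ⁻¹' {y₀} := h
        rw [hfib] at this
        have : dist xm x₀ = 0 := by simp [Set.mem_singleton_iff.mp this]
        exact absurd (this ▸ hxmK) (not_le.mpr hδX)
      · intro x hx
        by_contra h
        exact absurd (hmin (not_lt.mp h)) (not_le.mpr hx)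
    · exact ⟨1, one_pos, fun x _ => not_le.mp fun h => hK ⟨x, h⟩⟩
  obtain ⟨δY, hδY, hδYprop⟩ := hsep
  refine ⟨δY, hδY, E, ?_⟩
  intro I A q hpart hborder
  choose p hp using fun i => hπs (q i)
  have hb : ∀ i : I, ∀ g ∈ A i, (∃ e ∈ E, e * g ∉ A i) → dist (g • p i) x₀ < δX := by
    intro i g hg he
    apply hδYprop
    rw [hπeq, hp]
    exact hborder i g hg he
  obtain ⟨y, hy⟩ := hE I A p hpart hb
  refine ⟨π y, fun i g hg => ?_⟩
  have h1 := hπu (hy i g hg)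
  rwa [hπeq, hπeq, hp] at h1
end

section
/- Let (G, X, 0) be an expansive pointed dynamical system with expansivity constant Δ > 0, and let 0 < ε ≤ Δ/4. Let (A_i, x_i)_{i∈I} and (B_i, x_i)_{i∈I} be two designations in (G, X, 0) with the same index set and the same points, such that for each i ∈ I one has d(g·x_i, 0) < ε for all g ∈ G \ (A_i ∩ B_i). If y ∈ X is an ε-realization of (A_i, x_i)_{i∈I} and z ∈ X is an ε-realization of (B_i, x_i)_{i∈I}, then y = z. -/
/-- in an expansive pointed system with expansivity constant `Δ`, for
`0 < ε ≤ Δ/4`, if two designations `(A_i, p_i)` and `(B_i, p_i)` share their points,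
and each `p_i` is `ε`-close to `0` along all of `G \ (A_i ∩ B_i)`, then any
`ε`-realizations of the two designations are equal. -/
theorem statement6 {G X : Type} [Group G] [MetricSpace X] [CompactSpace X]
    [MulAction G X]
    (hcont : ∀ g : G, Continuous fun x : X => g • x)
    (x₀ : X) (hx₀ : ∀ g : G, g • x₀ = x₀)
    (Δ : ℝ) (hΔ : 0 < Δ)
    (hexp : ∀ x y : X, (∀ g : G, dist (g • x) (g • y) ≤ Δ) → x = y)
    (ε : ℝ) (hε : 0 < ε) (hεΔ : ε ≤ Δ / 4)
    (I : Type) (A B : I → Set G) (p : I → X)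
    (hpartA : ∀ g : G, ∃! i : I, g ∈ A i)
    (hpartB : ∀ g : G, ∃! i : I, g ∈ B i)
    (hsmall : ∀ i : I, ∀ g : G, g ∉ A i ∩ B i → dist (g • p i) x₀ < ε)
    (y z : X)
    (hy : ∀ i : I, ∀ g ∈ A i, dist (g • y) (g • p i) < ε)
    (hz : ∀ i : I, ∀ g ∈ B i, dist (g • z) (g • p i) < ε) :
    y = z := by
  apply hexp
  intro g
  obtain ⟨i, hiA, hiu⟩ := hpartA g
  obtain ⟨j, hjB, hju⟩ := hpartB g
  by_cases hij : i = j
  · subst hij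
    have := hy i g hiA
    have := hz i g hjB
    have : dist (g • y) (g • z) < 2 * ε := by
      calc dist (g • y) (g • z) ≤ dist (g • y) (g • p i) + dist (g • p i) (g • z) :=
            dist_triangle _ _ _
        _ < ε + ε := by rw [dist_comm (g • p i)]; linarith
        _ = 2 * ε := by ring
    linarith
  · have hiB : g ∉ B i := fun h => hij (hju i h)
    have hjA : g ∉ A j := fun h => hij (hiu j h).symm
    have h1 : dist (g • p i) x₀ < ε := hsmall i g (fun h => hiB h.2)
    have h2 : dist (g • p j) x₀ < ε := hsmall j g (fun h => hjA h.1)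
    have hy' := hy i g hiA
    have hz' := hz j g hjB
    calc dist (g • y) (g • z) ≤ dist (g • y) (g • p i) + dist (g • p i) x₀
          + (dist x₀ (g • p j) + dist (g • p j) (g • z)) := by
          have := dist_triangle4 (g • y) (g • p i) x₀ (g • z)
          have := dist_triangle x₀ (g • p j) (g • z)
          linarith
      _ ≤ Δ := by
          rw [dist_comm x₀ (g • p j), dist_comm (g • p j) (g • z)]
          linarith
end

section
/- Let (G, X, 0) be an expansive pointed dynamical system and let f : X → X be an endomorphism. Then there exists ε₀ > 0 (depending only on the system and f) such that for every ε with 0 < ε ≤ ε₀ and every designation (A_i, x_i)_{i∈I} in (G, X, 0): if y ∈ X is an ε-realization of (A_i, x_i)_{i∈I} and z ∈ X is an ε-realization of (A_i, f(x_i))_{i∈I}, then z = f(y). -/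
/-- in an expansive pointed system with an endomorphism `f`, there is
`ε₀ > 0` (depending only on the system and `f`) such that for every `0 < ε ≤ ε₀` and
every designation `(A_i, p_i)`: if `y` is an `ε`-realization of `(A_i, p_i)` and `z`
is an `ε`-realization of `(A_i, f(p_i))`, then `z = f(y)`. -/
theorem statement7 {G X : Type} [Group G] [MetricSpace X] [CompactSpace X]
    [MulAction G X]
    (hcont : ∀ g : G, Continuous fun x : X => g • x)
    (x₀ : X) (hx₀ : ∀ g : G, g • x₀ = x₀)
    (Δ : ℝ) (hΔ : 0 < Δ)
    (hexp : ∀ x y : X, (∀ g : G, dist (g • x) (g • y) ≤ Δ) → x = y)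
    (f : X → X) (hf : Continuous f) (hf₀ : f x₀ = x₀)
    (hfeq : ∀ (g : G) (x : X), f (g • x) = g • f x) :
    ∃ ε₀ : ℝ, 0 < ε₀ ∧ ∀ ε : ℝ, 0 < ε → ε ≤ ε₀ →
      ∀ (I : Type) (A : I → Set G) (p : I → X),
        (∀ g : G, ∃! i : I, g ∈ A i) →
        ∀ y z : X,
          (∀ i : I, ∀ g ∈ A i, dist (g • y) (g • p i) < ε) →
          (∀ i : I, ∀ g ∈ A i, dist (g • z) (g • f (p i)) < ε) →
          z = f y := by
  have huc : UniformContinuous f := CompactSpace.uniformContinuous_of_continuous hf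
  obtain ⟨δ, hδ, hδf⟩ := Metric.uniformContinuous_iff.mp huc (Δ / 2) (by linarith)
  refine ⟨min δ (Δ / 2), lt_min hδ (by linarith), ?_⟩
  intro ε hε hεle I A p hpart y z hy hz
  refine hexp z (f y) (fun g => ?_)
  obtain ⟨i, hi, -⟩ := hpart g
  have h1 : dist (g • z) (g • f (p i)) < Δ / 2 :=
    lt_of_lt_of_le (hz i g hi) (hεle.trans (min_le_right _ _))
  have h2 : dist (g • y) (g • p i) < δ :=
    lt_of_lt_of_le (hy i g hi) (hεle.trans (min_le_left _ _))
  have h3 : dist (f (g • p i)) (f (g • y)) < Δ / 2 := hδf (dist_comm (g • y) (g • p i) ▸ h2)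
  rw [hfeq, hfeq] at h3
  calc dist (g • z) (g • f y) ≤ dist (g • z) (g • f (p i)) + dist (g • f (p i)) (g • f y) :=
        dist_triangle _ _ _
    _ ≤ Δ := by linarith
end

section
/- Let X be a compact metric space with a distinguished point 0 ∈ X, and let f : X → X be a continuous function such that fⁿ(x) → 0 as n → ∞ for every x ∈ X. Then for each ε > 0 there exists n ∈ ℕ such that for all x ∈ X there is some k ≤ n with d(f^k(x), 0) < ε. -/
/-- if `f` is a continuous self-map of a compact metric space with
distinguished point `x₀` and `fⁿ(x) → x₀` for every `x`, then for each `ε > 0`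
there is `n` such that every orbit visits the `ε`-ball around `x₀` within `n` steps. -/
theorem statement8 {X : Type} [MetricSpace X] [CompactSpace X]
    (x₀ : X) (f : X → X) (hf : Continuous f)
    (hAN : ∀ x : X, Filter.Tendsto (fun n => f^[n] x) Filter.atTop (nhds x₀))
    (ε : ℝ) (hε : 0 < ε) :
    ∃ n : ℕ, ∀ x : X, ∃ k ≤ n, dist (f^[k] x) x₀ < ε := by
  set U : ℕ → Set X := fun k => {x | dist (f^[k] x) x₀ < ε} with hU
  have hopen : ∀ k, IsOpen (U k) := fun k =>
    isOpen_lt ((hf.iterate k).dist continuous_const) continuous_const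
  have hcover : Set.univ ⊆ ⋃ k, U k := by
    intro x _
    have := (hAN x) (Metric.ball_mem_nhds x₀ hε)
    rcases (Filter.eventually_atTop.mp this) with ⟨N, hN⟩
    exact Set.mem_iUnion.mpr ⟨N, hN N le_rfl⟩
  obtain ⟨s, hs⟩ := isCompact_univ.elim_finite_subcover U hopen hcover
  rcases s.eq_empty_or_nonempty with rfl | hne
  · simp at hs
    exact ⟨0, fun x => (hs.false x).elim⟩
  · refine ⟨s.max' hne, fun x => ?_⟩
    obtain ⟨k, hk, hxk⟩ := Set.mem_iUnion₂.mp (hs (Set.mem_univ x))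
    exact ⟨k, s.le_max' k hk, hxk⟩
end

section
/- Every finitely generated group G possessing a finite normal subgroup K ⊴ G such that the quotient G/K has an abelian subgroup of finite index, has a finite-index subgroup isomorphic to ℤ^d for some d ∈ ℕ. -/
open Subgroup DirectSum
open scoped commutatorElement IsMulCommutative

/-- A finite-index subgroup of a subgroup, pushed into the ambient group, still has
finite index, and is isomorphic to the original. -/
theorem aux_lift10 {G : Type*} [Group G] (K : Subgroup G) [K.FiniteIndex]
    (T : Subgroup ↥K) [T.FiniteIndex] :
    (T.map K.subtype).FiniteIndex ∧ Nonempty (↥(T.map K.subtype) ≃* ↥T) := by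
  constructor
  · constructor
    have h1 : (T.map K.subtype).relIndex K * K.index = (T.map K.subtype).index :=
      relIndex_mul_index (map_subtype_le T)
    have h2 : (T.map K.subtype).relIndex K = T.index := by
      rw [relIndex, subgroupOf, comap_map_eq_self_of_injective K.subtype_injective]
    rw [← h1, h2]
    exact Nat.mul_ne_zero FiniteIndex.index_ne_zero FiniteIndex.index_ne_zero
  · exact ⟨(equivMapOfInjective T K.subtype K.subtype_injective).symm⟩

/-- Every finitely generated abelian group has a finite-index subgroup isomorphic
to `ℤ^d`. -/
theorem aux_abelian10 (W : Type*) [CommGroup W] [hW : Group.FG W] :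
    ∃ (d : ℕ) (H : Subgroup W), H.FiniteIndex ∧
      Nonempty (↥H ≃* Multiplicative (Fin d → ℤ)) := by
  obtain ⟨n, ι, fι, p, hp, e, ⟨f⟩⟩ := AddCommGroup.equiv_free_prod_directSum_zmod (Additive W)
  haveI : ∀ i, NeZero (p i ^ e i) := fun i => ⟨pow_ne_zero _ (hp i).ne_zero⟩
  haveI : Finite (⨁ i, ZMod (p i ^ e i)) :=
    Finite.of_equiv _ DFinsupp.equivFunOnFintype.symm
  set D := ⨁ i, ZMod (p i ^ e i) with hD
  let f₂ : Additive W ≃+ (Fin n → ℤ) × D :=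
    f.trans (AddEquiv.prodCongr Finsupp.addEquivFunOnFinite (AddEquiv.refl D))
  let f' : W ≃* Multiplicative ((Fin n → ℤ) × D) :=
    (MulEquiv.multiplicativeAdditive W).symm.trans (AddEquiv.toMultiplicative f₂)
  let φ : Multiplicative ((Fin n → ℤ) × D) →* Multiplicative D :=
    AddMonoidHom.toMultiplicative (AddMonoidHom.snd (Fin n → ℤ) D)
  haveI : Finite (Multiplicative D) := inferInstanceAs (Finite D)
  haveI : Finite ↥φ.range := Subtype.finite
  let P : Subgroup (Multiplicative ((Fin n → ℤ) × D)) := φ.ker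
  haveI hP : P.FiniteIndex := Subgroup.finiteIndex_ker φ
  have hmem : ∀ x : Multiplicative ((Fin n → ℤ) × D),
      x ∈ P ↔ (Multiplicative.toAdd x).2 = 0 := by
    intro x
    constructor
    · intro hx
      have : φ x = 1 := hx
      simpa [φ, AddMonoidHom.toMultiplicative] using this
    · intro hx
      show φ x = 1
      simp [φ, AddMonoidHom.toMultiplicative, hx]
  let g : ↥P ≃* Multiplicative (Fin n → ℤ) :=
  { toFun := fun x => Multiplicative.ofAdd (Multiplicative.toAdd (x : Multiplicative ((Fin n → ℤ) × D))).1
    invFun := fun a => ⟨Multiplicative.ofAdd (Multiplicative.toAdd a, 0), (hmem _).mpr rfl⟩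
    left_inv := fun x => by
      have hx := (hmem _).mp x.2
      apply Subtype.ext
      apply Multiplicative.toAdd.injective
      exact Prod.ext rfl hx.symm
    right_inv := fun a => rfl
    map_mul' := fun x y => rfl }
  let L : Subgroup W := P.comap (f' : W →* Multiplicative ((Fin n → ℤ) × D))
  have hLindex : L.index = P.index := index_comap_of_surjective _ f'.surjective
  refine ⟨n, L, ⟨by rw [hLindex]; exact hP.index_ne_zero⟩, ?_⟩
  have hmap : L.map (f' : W →* Multiplicative ((Fin n → ℤ) × D)) = P :=
    map_comap_eq_self_of_surjective f'.surjective P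
  exact ⟨((f'.subgroupMap L).trans (MulEquiv.subgroupCongr hmap)).trans g⟩

/-- a finitely generated group with a finite normal subgroup `K` such
that `G/K` is virtually abelian has a finite-index subgroup isomorphic to `ℤ^d` for
some `d`. -/
theorem statement10 {G : Type} [Group G] (hFG : Group.FG G)
    (K : Subgroup G) [K.Normal] (hKfin : Finite K)
    (hQ : ∃ A : Subgroup (G ⧸ K), A.FiniteIndex ∧ ∀ x y : A, x * y = y * x) :
    ∃ (d : ℕ) (H : Subgroup G), H.FiniteIndex ∧
      Nonempty (H ≃* Multiplicative (Fin d → ℤ)) := by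
  obtain ⟨A, hAfi, hAcomm⟩ := hQ
  haveI := hFG
  set π := QuotientGroup.mk' K with hπ
  set H₀ : Subgroup G := A.comap π with hH₀
  haveI hH₀fi : H₀.FiniteIndex :=
    ⟨by rw [hH₀, index_comap_of_surjective _ (QuotientGroup.mk'_surjective K)]
        exact hAfi.index_ne_zero⟩
  haveI : Group.FG ↥H₀ := Subgroup.fg_of_index_ne_zero H₀
  -- all commutators of H₀ lie in K, hence the commutator set is finite
  haveI hcs : Finite (commutatorSet ↥H₀) := by
    have hsub : commutatorSet ↥H₀ ⊆ (Subtype.val ⁻¹' (K : Set G)) := by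
      rintro x ⟨g, h, rfl⟩
      have hc : Commute (π ↑g) (π ↑h) := by
        have := hAcomm ⟨π ↑g, g.2⟩ ⟨π ↑h, h.2⟩
        exact Subtype.ext_iff.mp this
      have hker : π (↑⁅g, h⁆ : G) = 1 := by
        have : (↑⁅g, h⁆ : G) = ⁅(↑g : G), (↑h : G)⁆ := rfl
        rw [this, map_commutatorElement]
        exact commutatorElement_eq_one_iff_commute.mpr hc
      show (↑⁅g, h⁆ : G) ∈ (K : Set G)
      simpa [hπ, QuotientGroup.eq_one_iff] using hker
    have hKset : (K : Set G).Finite := Set.finite_coe_iff.mp hKfin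
    exact Set.Finite.to_subtype ((hKset.preimage Subtype.val_injective.injOn).subset hsub)
  haveI hZfi : (center ↥H₀).FiniteIndex := Subgroup.finiteIndex_center (G := ↥H₀)
  haveI : Group.FG ↥(center ↥H₀) := Subgroup.fg_of_index_ne_zero (center ↥H₀)
  obtain ⟨d, M, hMfi, ⟨isoM⟩⟩ := aux_abelian10 ↥(center ↥H₀)
  obtain ⟨hM₁fi, ⟨isoM₁⟩⟩ := aux_lift10 (center ↥H₀) M
  haveI := hM₁fi
  obtain ⟨hHfi, ⟨isoH⟩⟩ := aux_lift10 H₀ (M.map (center ↥H₀).subtype)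
  exact ⟨d, _, hHfi, ⟨(isoH.trans isoM₁).trans isoM⟩⟩
end

section
/- Say a group G is nil-rigid if for every expansive 0-gluing pointed dynamical system (G, X, 0) in which the homoclinic points are dense, every asymptotically nilpotent endomorphism of (G, X, 0) is nilpotent. Let H ≤ G be groups such that the set of left cosets of H in G is at most countable. If G is nil-rigid, then so is H. -/
set_option linter.unusedSectionVars false
set_option maxHeartbeats 1000000


/-- A point `x` is homoclinic: `g • x` is eventually close to `x₀` outside finite
subsets of `G`. -/
def Homoclinic (G : Type) [Group G] {X : Type} [MetricSpace X] [MulAction G X]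
    (x₀ x : X) : Prop :=
  ∀ ε : ℝ, 0 < ε → ∃ E : Finset G, ∀ g : G, g ∉ E → dist (g • x) x₀ < ε

/-- A group `G` is nil-rigid if for every expansive `0`-gluing pointed dynamical
system `(G, X, 0)` with dense homoclinic points, every asymptotically nilpotent
endomorphism is nilpotent. -/
def NilRigid (G : Type) [Group G] : Prop :=
  ∀ (X : Type) (_ : MetricSpace X) (_ : CompactSpace X) (_ : MulAction G X),
    (∀ g : G, Continuous fun x : X => g • x) →
    ∀ x₀ : X, (∀ g : G, g • x₀ = x₀) →
    (∃ Δ : ℝ, 0 < Δ ∧ ∀ x y : X, (∀ g : G, dist (g • x) (g • y) ≤ Δ) → x = y) →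
    ZeroGluing G x₀ →
    Dense {x : X | Homoclinic G x₀ x} →
    ∀ f : X → X, Continuous f → f x₀ = x₀ →
    (∀ (g : G) (x : X), f (g • x) = g • f x) →
    (∀ x : X, Filter.Tendsto (fun n => f^[n] x) Filter.atTop (nhds x₀)) →
    ∃ n : ℕ, ∀ x : X, f^[n] x = x₀


namespace S16

variable {G : Type} [Group G] {H : Subgroup G} {X : Type} [MetricSpace X] [MulAction H X]

/-- The co-induced system. -/
@[ext] structure Ind (H : Subgroup G) (X : Type) [MulAction H X] : Type where
  val : G → X
  prop : ∀ (k : G) (h : H), val (k * (h : G)) = h⁻¹ • val k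

instance : MulAction G (Ind H X) where
  smul g y := ⟨fun k => y.val (g⁻¹ * k), by
    intro k h
    show y.val (g⁻¹ * (k * (h : G))) = h⁻¹ • y.val (g⁻¹ * k)
    rw [← mul_assoc]
    exact y.prop (g⁻¹ * k) h⟩
  one_smul y := by ext k; show y.val (1⁻¹ * k) = y.val k; rw [inv_one, one_mul]
  mul_smul a b y := by
    ext k; show y.val ((a * b)⁻¹ * k) = y.val (b⁻¹ * (a⁻¹ * k))
    rw [mul_inv_rev, mul_assoc]

lemma smul_val (g : G) (y : Ind H X) (k : G) : (g • y).val k = y.val (g⁻¹ * k) := rfl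

noncomputable def sig (H : Subgroup G) (k : G) : H :=
  ⟨k⁻¹ * (QuotientGroup.mk k : G ⧸ H).out,
    QuotientGroup.eq.mp (QuotientGroup.out_eq' (QuotientGroup.mk k)).symm⟩

lemma coe_sig (k : G) : (sig H k : G) = k⁻¹ * (QuotientGroup.mk k : G ⧸ H).out := rfl

lemma eval_out (y : Ind H X) (k : G) :
    y.val ((QuotientGroup.mk k : G ⧸ H).out) = (sig H k)⁻¹ • y.val k := by
  have h := y.prop k (sig H k)
  rw [coe_sig, mul_inv_cancel_left] at h
  exact h

lemma eval_eq (y : Ind H X) (k : G) :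
    y.val k = sig H k • y.val ((QuotientGroup.mk k : G ⧸ H).out) := by
  rw [eval_out, smul_inv_smul]

lemma sig_out (c : G ⧸ H) : sig H c.out = 1 := by
  apply Subtype.ext
  show (c.out)⁻¹ * ((QuotientGroup.mk c.out : G ⧸ H)).out = 1
  rw [QuotientGroup.out_eq' c, inv_mul_cancel]

noncomputable def asm (H : Subgroup G) (X : Type) [MulAction H X] (f : G ⧸ H → X) : Ind H X where
  val k := sig H k • f (QuotientGroup.mk k)
  prop k h := by
    have hq : (QuotientGroup.mk (k * (h : G)) : G ⧸ H) = QuotientGroup.mk k :=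
      QuotientGroup.mk_mul_of_mem k h.2
    have hs : sig H (k * (h : G)) = h⁻¹ * sig H k := by
      apply Subtype.ext
      show (k * (h : G))⁻¹ * ((QuotientGroup.mk (k * (h : G)) : G ⧸ H)).out
        = (h : G)⁻¹ * (k⁻¹ * (QuotientGroup.mk k : G ⧸ H).out)
      rw [hq, mul_inv_rev, mul_assoc]
    show sig H (k * (h : G)) • f (QuotientGroup.mk (k * (h : G)))
      = h⁻¹ • (sig H k • f (QuotientGroup.mk k))
    rw [hq, hs, mul_smul]

lemma asm_val (f : G ⧸ H → X) (k : G) :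
    (asm H X f).val k = sig H k • f (QuotientGroup.mk k) := rfl

lemma asm_val_out (f : G ⧸ H → X) (c : G ⧸ H) : (asm H X f).val c.out = f c := by
  rw [asm_val, sig_out, one_smul, QuotientGroup.out_eq']

section dist

variable (enc : G ⧸ H ↪ ℕ)

noncomputable def w (c : G ⧸ H) : ℝ := (1 / 2 : ℝ) ^ (enc c)

lemma w_pos (c : G ⧸ H) : 0 < w enc c := by unfold w; positivity

lemma w_le_one (c : G ⧸ H) : w enc c ≤ 1 := by
  unfold w; apply pow_le_one₀ <;> norm_num

lemma w_le (c : G ⧸ H) {N : ℕ} (hc : enc c ≤ N) : (1/2 : ℝ)^N ≤ w enc c := by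
  unfold w; exact pow_le_pow_of_le_one (by norm_num) (by norm_num) hc

lemma summable_w : Summable (w enc) :=
  (summable_geometric_of_lt_one (by norm_num) (by norm_num)).comp_injective enc.injective

lemma tsum_w_le : ∑' c, w enc c ≤ 2 := by
  have h := Summable.tsum_le_tsum_of_inj enc enc.injective
    (fun n _ => by positivity) (fun c => le_rfl) (summable_w enc)
    (summable_geometric_of_lt_one (by norm_num) (by norm_num) : Summable fun n : ℕ => (1/2:ℝ)^n)
  calc ∑' c, w enc c ≤ ∑' n : ℕ, (1/2 : ℝ)^n := h
    _ = 2 := by rw [tsum_geometric_of_lt_one (by norm_num) (by norm_num)]; norm_num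

lemma tsum_tail_le (N : ℕ) (f : G ⧸ H → ℝ) (hf0 : ∀ c, 0 ≤ f c) (hle : ∀ c, f c ≤ w enc c)
    (hN : ∀ c, enc c ≤ N → f c = 0) : ∑' c, f c ≤ (1/2 : ℝ)^N := by
  classical
  set g : ℕ → ℝ := fun n => if n ≤ N then 0 else (1/2 : ℝ)^n with hg
  have hgeo : Summable (fun n : ℕ => (1/2 : ℝ)^n) :=
    summable_geometric_of_lt_one (by norm_num) (by norm_num)
  have hgs : Summable g := by
    refine Summable.of_nonneg_of_le (fun n => ?_) (fun n => ?_) hgeo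
    · simp only [hg]; split <;> positivity
    · simp only [hg]; split
      · positivity
      · exact le_rfl
  have hfs : Summable f := Summable.of_nonneg_of_le hf0 hle (summable_w enc)
  have h1 : ∑' c, f c ≤ ∑' n, g n := by
    apply Summable.tsum_le_tsum_of_inj enc enc.injective (fun n _ => by simp only [hg]; split <;> positivity)
      (fun c => ?_) hfs hgs
    simp only [hg]
    split
    · exact le_of_eq (hN c (by assumption))
    · exact hle c
  have h2 : ∑' n, g n = (1/2 : ℝ)^N := by
    have h3 := Summable.sum_add_tsum_nat_add (f := g) (N + 1) hgs
    have h4 : ∑ i ∈ Finset.range (N + 1), g i = 0 := by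
      apply Finset.sum_eq_zero
      intro i hi
      simp only [hg, if_pos (Nat.lt_succ_iff.mp (Finset.mem_range.mp hi))]
    have h5 : ∀ n : ℕ, g (n + (N + 1)) = (1/2 : ℝ)^(N+1) * (1/2:ℝ)^n := by
      intro n
      simp only [hg, if_neg (by omega : ¬ n + (N+1) ≤ N)]
      rw [← pow_add]; ring_nf
    rw [h4, zero_add] at h3
    rw [← h3]
    simp only [h5]
    rw [tsum_mul_left, tsum_geometric_of_lt_one (by norm_num) (by norm_num)]
    norm_num
    ring
  exact h1.trans (le_of_eq h2)

noncomputable def idist (y z : Ind H X) : ℝ :=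
  ∑' c : G ⧸ H, w enc c * min 1 (dist (y.val c.out) (z.val c.out))

lemma term_nonneg (y z : Ind H X) (c : G ⧸ H) :
    0 ≤ w enc c * min 1 (dist (y.val c.out) (z.val c.out)) :=
  mul_nonneg (w_pos enc c).le (le_min zero_le_one dist_nonneg)

lemma term_le_w (y z : Ind H X) (c : G ⧸ H) :
    w enc c * min 1 (dist (y.val c.out) (z.val c.out)) ≤ w enc c := by
  nth_rewrite 2 [← mul_one (w enc c)]
  exact mul_le_mul_of_nonneg_left (min_le_left _ _) (w_pos enc c).le

lemma summable_term (y z : Ind H X) :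
    Summable (fun c => w enc c * min 1 (dist (y.val c.out) (z.val c.out))) :=
  Summable.of_nonneg_of_le (term_nonneg enc y z) (term_le_w enc y z) (summable_w enc)

lemma idist_nonneg (y z : Ind H X) : 0 ≤ idist enc y z := tsum_nonneg (term_nonneg enc y z)

lemma idist_self (y : Ind H X) : idist enc y y = 0 := by
  unfold idist; simp

lemma idist_comm (y z : Ind H X) : idist enc y z = idist enc z y := by
  unfold idist; congr 1; funext c; rw [dist_comm]

lemma min_one_add {a b : ℝ} (ha : 0 ≤ a) (hb : 0 ≤ b) :
    min 1 (a + b) ≤ min 1 a + min 1 b := by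
  rcases le_total 1 a with h | h
  · rw [min_eq_left h]
    exact le_trans (min_le_left _ _) (le_add_of_nonneg_right (le_min zero_le_one hb))
  · rcases le_total 1 b with h' | h'
    · rw [min_eq_left h']
      exact le_trans (min_le_left _ _) (le_add_of_nonneg_left (le_min zero_le_one ha))
    · rw [min_eq_right h, min_eq_right h']
      exact min_le_right _ _

lemma idist_triangle (x y z : Ind H X) : idist enc x z ≤ idist enc x y + idist enc y z := by
  unfold idist
  rw [← Summable.tsum_add (summable_term enc x y) (summable_term enc y z)]
  apply Summable.tsum_le_tsum _ (summable_term enc x z)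
    ((summable_term enc x y).add (summable_term enc y z))
  intro c
  rw [← mul_add]
  apply mul_le_mul_of_nonneg_left _ (w_pos enc c).le
  calc min 1 (dist (x.val c.out) (z.val c.out))
      ≤ min 1 (dist (x.val c.out) (y.val c.out) + dist (y.val c.out) (z.val c.out)) :=
        min_le_min le_rfl (dist_triangle _ _ _)
    _ ≤ _ := min_one_add dist_nonneg dist_nonneg

lemma coord_le (y z : Ind H X) (c : G ⧸ H) :
    w enc c * min 1 (dist (y.val c.out) (z.val c.out)) ≤ idist enc y z :=
  Summable.le_tsum (summable_term enc y z) c (fun j _ => term_nonneg enc y z j)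

lemma dist_out_lt {y z : Ind H X} {N : ℕ} {b : ℝ} (c : G ⧸ H) (hc : enc c ≤ N)
    (h : idist enc y z < (1/2 : ℝ)^N * min 1 b) : dist (y.val c.out) (z.val c.out) < b := by
  have h1 := coord_le enc y z c
  have h3 : (1/2 : ℝ)^N * min 1 (dist (y.val c.out) (z.val c.out))
      ≤ w enc c * min 1 (dist (y.val c.out) (z.val c.out)) :=
    mul_le_mul_of_nonneg_right (w_le enc c hc) (le_min zero_le_one dist_nonneg)
  have h4 : (1/2 : ℝ)^N * min 1 (dist (y.val c.out) (z.val c.out))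
      < (1/2 : ℝ)^N * min 1 b := lt_of_le_of_lt (h3.trans h1) h
  have h5 : min 1 (dist (y.val c.out) (z.val c.out)) < min 1 b :=
    lt_of_mul_lt_mul_left h4 (by positivity)
  by_contra hb'
  push_neg at hb'
  exact absurd (min_le_min le_rfl hb') (not_le.mpr h5)

lemma idist_le_of (y z : Ind H X) (N : ℕ) (b : ℝ) (hb : 0 ≤ b)
    (h : ∀ c : G ⧸ H, enc c ≤ N → dist (y.val c.out) (z.val c.out) ≤ b) :
    idist enc y z ≤ 2 * b + (1/2 : ℝ)^N := by
  classical
  set f1 : G ⧸ H → ℝ := fun c =>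
    if enc c ≤ N then w enc c * min 1 (dist (y.val c.out) (z.val c.out)) else 0 with hf1
  set f2 : G ⧸ H → ℝ := fun c => if enc c ≤ N then 0 else w enc c with hf2
  have hs1 : Summable f1 := by
    apply Summable.of_nonneg_of_le (fun c => ?_) (fun c => ?_) (summable_w enc)
    · simp only [hf1]; split
      · exact term_nonneg enc y z c
      · exact le_rfl
    · simp only [hf1]; split
      · exact term_le_w enc y z c
      · exact (w_pos enc c).le
  have hs2 : Summable f2 := by
    apply Summable.of_nonneg_of_le (fun c => ?_) (fun c => ?_) (summable_w enc)
    · simp only [hf2]; split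
      · exact le_rfl
      · exact (w_pos enc c).le
    · simp only [hf2]; split
      · exact (w_pos enc c).le
      · exact le_rfl
  have hmain : idist enc y z ≤ ∑' c, f1 c + ∑' c, f2 c := by
    rw [← Summable.tsum_add hs1 hs2]
    apply Summable.tsum_le_tsum (fun c => ?_) (summable_term enc y z) (hs1.add hs2)
    by_cases hc : enc c ≤ N
    · simp only [hf1, hf2, if_pos hc, add_zero]; exact le_rfl
    · simp only [hf1, hf2, if_neg hc, zero_add]; exact term_le_w enc y z c
  have hb1 : ∑' c, f1 c ≤ 2 * b := by
    have : ∑' c, f1 c ≤ ∑' c, w enc c * b := by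
      apply Summable.tsum_le_tsum (fun c => ?_) hs1 ((summable_w enc).mul_right b)
      simp only [hf1]; split
      · apply mul_le_mul_of_nonneg_left _ (w_pos enc c).le
        exact (min_le_right _ _).trans (h c (by assumption))
      · exact mul_nonneg (w_pos enc c).le hb
    calc ∑' c, f1 c ≤ ∑' c, w enc c * b := this
      _ = (∑' c, w enc c) * b := tsum_mul_right
      _ ≤ 2 * b := mul_le_mul_of_nonneg_right (tsum_w_le enc) hb
  have hb2 : ∑' c, f2 c ≤ (1/2 : ℝ)^N := by
    apply tsum_tail_le enc N f2 (fun c => ?_) (fun c => ?_) (fun c hc => by simp [hf2, hc])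
    · simp only [hf2]; split
      · exact le_rfl
      · exact (w_pos enc c).le
    · simp only [hf2]; split
      · exact (w_pos enc c).le
      · exact le_rfl
  linarith

lemma idist_eq_zero {y z : Ind H X} (h : idist enc y z = 0) : y = z := by
  have hco : ∀ c : G ⧸ H, y.val c.out = z.val c.out := by
    intro c
    have h1 := coord_le enc y z c
    have h2 := term_nonneg enc y z c
    have h3 : w enc c * min 1 (dist (y.val c.out) (z.val c.out)) = 0 := le_antisymm (h ▸ h1) h2
    have h4 : min 1 (dist (y.val c.out) (z.val c.out)) = 0 :=
      (mul_eq_zero.mp h3).resolve_left (w_pos enc c).ne'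
    have h5 : dist (y.val c.out) (z.val c.out) = 0 := by
      rcases le_total 1 (dist (y.val c.out) (z.val c.out)) with hd | hd
      · rw [min_eq_left hd] at h4; norm_num at h4
      · rwa [min_eq_right hd] at h4
    exact dist_eq_zero.mp h5
  ext k
  rw [eval_eq y k, eval_eq z k, hco]

noncomputable def indMetric : MetricSpace (Ind H X) where
  dist := idist enc
  dist_self := idist_self enc
  dist_comm := idist_comm enc
  dist_triangle := idist_triangle enc
  eq_of_dist_eq_zero := idist_eq_zero enc

end dist

section compact

variable (enc : G ⧸ H ↪ ℕ)

lemma exists_pos_le_finset {α : Type} (F : Finset α) (g : α → ℝ) (hg : ∀ c ∈ F, 0 < g c) :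
    ∃ δ : ℝ, 0 < δ ∧ ∀ c ∈ F, δ ≤ g c := by
  classical
  refine ⟨(insert (1:ℝ) (F.image g)).min' (Finset.insert_nonempty _ _), ?_, ?_⟩
  · have hmem := (insert (1:ℝ) (F.image g)).min'_mem (Finset.insert_nonempty _ _)
    rcases Finset.mem_insert.mp hmem with h | h
    · rw [h]; exact one_pos
    · obtain ⟨c, hc, hce⟩ := Finset.mem_image.mp h
      rw [← hce]; exact hg c hc
  · intro c hc
    exact Finset.min'_le _ _ (Finset.mem_insert_of_mem (Finset.mem_image_of_mem g hc))

lemma exists_pow_half_lt {ε : ℝ} (hε : 0 < ε) : ∃ N : ℕ, (1/2 : ℝ)^N < ε := by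
  obtain ⟨N, hN⟩ := exists_pow_lt_of_lt_one hε (by norm_num : (1/2 : ℝ) < 1)
  exact ⟨N, hN⟩

lemma indCompact [CompactSpace X] (hXcont : ∀ h : H, Continuous fun x : X => h • x) :
    letI := indMetric (H := H) (X := X) enc; CompactSpace (Ind H X) := by
  letI m := indMetric (H := H) (X := X) enc
  classical
  set S : Set (G → X) := {y : G → X | ∀ (k : G) (h : H), y (k * (h : G)) = h⁻¹ • y k} with hS
  have hclosed : IsClosed S := by
    have : S = ⋂ (k : G), ⋂ (h : H), {y : G → X | y (k * (h : G)) = h⁻¹ • y k} := by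
      ext y; simp [hS, Set.mem_iInter]
    rw [this]
    refine isClosed_iInter fun k => isClosed_iInter fun h => ?_
    exact isClosed_eq (continuous_apply _) ((hXcont h⁻¹).comp (continuous_apply _))
  haveI : CompactSpace S := isCompact_iff_compactSpace.mp hclosed.isCompact
  set φ : S → Ind H X := fun y => ⟨y.1, y.2⟩ with hφ
  have hsurj : Function.Surjective φ := fun z => ⟨⟨z.val, z.prop⟩, rfl⟩
  have hcont : Continuous φ := by
    rw [continuous_iff_continuousAt]
    intro y
    rw [ContinuousAt, Metric.tendsto_nhds]
    intro ε hε
    obtain ⟨N, hN⟩ := exists_pow_half_lt (half_pos hε)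
    set F := (Finset.range (N+1)).preimage enc (Set.injOn_of_injective enc.injective) with hF
    have hFN : ∀ c : G ⧸ H, enc c ≤ N → c ∈ F := by
      intro c hc
      simp only [hF, Finset.mem_preimage, Finset.mem_range]
      omega
    have hmem : {z : S | ∀ c ∈ F, dist (z.1 c.out) (y.1 c.out) < ε/5} ∈ nhds y := by
      have heq : {z : S | ∀ c ∈ F, dist (z.1 c.out) (y.1 c.out) < ε/5}
          = ⋂ c ∈ (F : Set (G ⧸ H)), {z : S | dist (z.1 c.out) (y.1 c.out) < ε/5} := by
        ext z; simp
      rw [heq]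
      rw [Filter.biInter_mem F.finite_toSet]
      intro c _
      have hopen : IsOpen {z : S | dist (z.1 c.out) (y.1 c.out) < ε/5} := by
        have : Continuous fun z : S => z.1 c.out := (continuous_apply c.out).comp continuous_subtype_val
        exact isOpen_lt (continuous_dist.comp (this.prodMk continuous_const)) continuous_const
      exact hopen.mem_nhds (by simp; positivity)
    refine Filter.mem_of_superset hmem ?_
    intro z hz
    have hle := idist_le_of enc (φ z) (φ y) N (ε/5) (by positivity)
      (fun c hc => (hz c (hFN c hc)).le)
    show dist (φ z) (φ y) < ε
    have : dist (φ z) (φ y) = idist enc (φ z) (φ y) := rfl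
    rw [this]
    have hε5 : 2 * (ε/5) + (1/2:ℝ)^N < ε := by
      have := hN; linarith
    linarith
  constructor
  have : (Set.univ : Set (Ind H X)) = φ '' Set.univ := by
    rw [Set.image_univ, Set.range_eq_univ.mpr hsurj]
  rw [this]
  exact isCompact_univ.image hcont

end compact

end S16


/-- nil-rigidity passes to subgroups with at most countably many
cosets. -/
theorem statement16 {G : Type} [Group G] (H : Subgroup G)
    (hcount : Countable (G ⧸ H)) (hG : NilRigid G) :
    NilRigid H := by
  classical
  intro X mX cX aX hXcont x₀ hfix hexp hglue hdense f hfc hf0 hfe hfnil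
  letI := mX; haveI := cX; letI := aX
  obtain ⟨enc⟩ := nonempty_embedding_nat (G ⧸ H)
  letI m : MetricSpace (S16.Ind H X) := S16.indMetric enc
  -- the fixed point
  set y₀ : S16.Ind H X := ⟨fun _ => x₀, fun k h => (hfix h⁻¹).symm⟩ with hy₀
  have hy0v : ∀ k : G, y₀.val k = x₀ := fun _ => rfl
  -- the endomorphism
  set Fm : S16.Ind H X → S16.Ind H X := fun y => ⟨fun k => f (y.val k), by
    intro k h
    show f (y.val (k * (h : G))) = h⁻¹ • f (y.val k)
    rw [y.prop k h, hfe]⟩ with hFm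
  have iter_val : ∀ (n : ℕ) (z : S16.Ind H X) (k : G),
      (Fm^[n] z).val k = f^[n] (z.val k) := by
    intro n
    induction n with
    | zero => intro z k; rfl
    | succ n ih =>
      intro z k
      rw [Function.iterate_succ_apply, Function.iterate_succ_apply]
      exact ih (Fm z) k
  -- generic upper bound helper
  have bound : ∀ (y z : S16.Ind H X) (N : ℕ) (ε : ℝ), 0 < ε → (1/2:ℝ)^N < ε/2 →
      (∀ c : G ⧸ H, enc c ≤ N → dist (y.val c.out) (z.val c.out) ≤ ε/5) →
      S16.idist enc y z < ε := by
    intro y z N ε hε hN hc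
    have := S16.idist_le_of enc y z N (ε/5) (by positivity) hc
    linarith
  -- compactness
  have compact : CompactSpace (S16.Ind H X) := S16.indCompact enc hXcont
  -- continuity of the action
  have actcont : ∀ g : G, Continuous fun y : S16.Ind H X => g • y := by
    intro g
    rw [Metric.continuous_iff]
    intro y ε hε
    obtain ⟨N, hN⟩ := S16.exists_pow_half_lt (half_pos hε)
    set F := (Finset.range (N+1)).preimage enc (Set.injOn_of_injective enc.injective) with hF
    have huc : ∀ k : G, ∃ d : ℝ, 0 < d ∧ ∀ a b : X, dist a b < d →
        dist (S16.sig H k • a) (S16.sig H k • b) < ε/5 := by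
      intro k
      have h1 := CompactSpace.uniformContinuous_of_continuous (hXcont (S16.sig H k))
      rw [Metric.uniformContinuous_iff] at h1
      obtain ⟨d, hd, hdd⟩ := h1 (ε/5) (by positivity)
      exact ⟨d, hd, fun a b hab => hdd hab⟩
    choose df hdf hdd using huc
    obtain ⟨δ, hδpos, hδle⟩ := S16.exists_pos_le_finset F
      (fun c => (1/2:ℝ)^(enc (QuotientGroup.mk (g⁻¹ * c.out))) * min 1 (df (g⁻¹ * c.out)))
      (fun c _ => mul_pos (by positivity) (lt_min one_pos (hdf _)))
    refine ⟨δ, hδpos, fun z hz => ?_⟩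
    have hz2 : S16.idist enc z y < δ := hz
    show S16.idist enc (g • z) (g • y) < ε
    apply bound _ _ N ε hε hN
    intro c hc
    have hcF : c ∈ F := by
      simp only [hF, Finset.mem_preimage, Finset.mem_range]
      omega
    have hz' : S16.idist enc z y
        < (1/2:ℝ)^(enc (QuotientGroup.mk (g⁻¹ * c.out))) * min 1 (df (g⁻¹ * c.out)) :=
      lt_of_lt_of_le hz2 (hδle c hcF)
    have h3 := S16.dist_out_lt enc (N := enc (QuotientGroup.mk (g⁻¹ * c.out)))
      (QuotientGroup.mk (g⁻¹ * c.out)) le_rfl hz'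
    have e1 : (g • z).val c.out
        = S16.sig H (g⁻¹ * c.out) • z.val ((QuotientGroup.mk (g⁻¹ * c.out) : G ⧸ H)).out := by
      rw [S16.smul_val, S16.eval_eq]
    have e2 : (g • y).val c.out
        = S16.sig H (g⁻¹ * c.out) • y.val ((QuotientGroup.mk (g⁻¹ * c.out) : G ⧸ H)).out := by
      rw [S16.smul_val, S16.eval_eq]
    rw [e1, e2]
    exact (hdd _ _ _ h3).le
  -- fixed point property
  have fixpt : ∀ g : G, g • y₀ = y₀ := by
    intro g; ext k; rfl
  -- expansivity
  have expans : ∃ Δ : ℝ, 0 < Δ ∧ ∀ y z : S16.Ind H X,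
      (∀ g : G, dist (g • y) (g • z) ≤ Δ) → y = z := by
    obtain ⟨Δ, hΔ, hexp'⟩ := hexp
    refine ⟨(1/2:ℝ)^(enc (QuotientGroup.mk 1 : G ⧸ H)) * (min 1 Δ / 2),
      mul_pos (by positivity) (half_pos (lt_min one_pos hΔ)), ?_⟩
    intro y z hall
    have hco : ∀ c : G ⧸ H, y.val c.out = z.val c.out := by
      intro c
      apply hexp' (y.val c.out) (z.val c.out)
      intro h
      set g := (QuotientGroup.mk 1 : G ⧸ H).out * (h : G) * (c.out)⁻¹ with hgdef
      have e1 : (g • y).val ((QuotientGroup.mk 1 : G ⧸ H)).out = h • y.val c.out := by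
        rw [S16.smul_val]
        have harg : g⁻¹ * ((QuotientGroup.mk 1 : G ⧸ H)).out = c.out * ((h⁻¹ : H) : G) := by
          rw [hgdef]; push_cast; group
        rw [harg, y.prop c.out h⁻¹, inv_inv]
      have e2 : (g • z).val ((QuotientGroup.mk 1 : G ⧸ H)).out = h • z.val c.out := by
        rw [S16.smul_val]
        have harg : g⁻¹ * ((QuotientGroup.mk 1 : G ⧸ H)).out = c.out * ((h⁻¹ : H) : G) := by
          rw [hgdef]; push_cast; group
        rw [harg, z.prop c.out h⁻¹, inv_inv]
      have hcoord := S16.coord_le enc (g • y) (g • z) (QuotientGroup.mk 1 : G ⧸ H)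
      have hd : S16.idist enc (g • y) (g • z)
          ≤ (1/2:ℝ)^(enc (QuotientGroup.mk 1 : G ⧸ H)) * (min 1 Δ / 2) := hall g
      have hw : S16.w enc (QuotientGroup.mk 1 : G ⧸ H) = (1/2:ℝ)^(enc (QuotientGroup.mk 1 : G ⧸ H)) := rfl
      rw [hw] at hcoord
      set d := dist ((g • y).val ((QuotientGroup.mk 1 : G ⧸ H)).out) ((g • z).val ((QuotientGroup.mk 1 : G ⧸ H)).out) with hdd
      have h6 : min 1 d ≤ min 1 Δ / 2 :=
        le_of_mul_le_mul_left (hcoord.trans hd) (by positivity)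
      have h7 : d ≤ Δ := by
        rcases le_total d 1 with hd1 | hd1
        · rw [min_eq_right hd1] at h6
          have := min_le_right (1:ℝ) Δ
          linarith
        · rw [min_eq_left hd1] at h6
          have := min_le_left (1:ℝ) Δ
          linarith
      rw [hdd, e1, e2] at h7
      exact h7
    ext k
    rw [S16.eval_eq y k, S16.eval_eq z k, hco]
  -- 0-gluing
  have glue : ZeroGluing G y₀ := by
    intro ε hε
    obtain ⟨N0, hN0⟩ := S16.exists_pow_half_lt (half_pos hε)
    set N := max N0 (enc (QuotientGroup.mk 1 : G ⧸ H)) with hNdef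
    have hNe : (1/2:ℝ)^N < ε/2 :=
      lt_of_le_of_lt (pow_le_pow_of_le_one (by norm_num) (by norm_num) (le_max_left _ _)) hN0
    have hN1 : enc (QuotientGroup.mk 1 : G ⧸ H) ≤ N := le_max_right _ _
    obtain ⟨δX, hδX, EX, hEX⟩ := hglue (ε/32) (by positivity)
    set r₀ : G := ((QuotientGroup.mk 1 : G ⧸ H)).out with hr₀
    set δ : ℝ := (1/2:ℝ)^N * min 1 (min δX (ε/32)) with hδdef
    have hδpos : 0 < δ := mul_pos (by positivity) (lt_min one_pos (lt_min hδX (by positivity)))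
    set Fq := (Finset.range (N+1)).preimage enc (Set.injOn_of_injective enc.injective) with hFq
    have hFqmem : ∀ c : G ⧸ H, enc c ≤ N → c ∈ Fq := by
      intro c hc
      simp only [hFq, Finset.mem_preimage, Finset.mem_range]
      omega
    set E : Finset G := (Fq.image (fun c : G ⧸ H => r₀ * c.out⁻¹)
        ∪ Fq.image (fun c : G ⧸ H => c.out * r₀⁻¹))
        ∪ EX.image (fun e : H => r₀ * (e : G) * r₀⁻¹) with hE
    refine ⟨δ, hδpos, E, ?_⟩
    intro I A p hpart hborder
    have hbord' : ∀ (i : I) (g : G), g ∈ A i → (∃ e ∈ E, e * g ∉ A i) →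
        ∀ c : G ⧸ H, enc c ≤ N → dist ((g • p i).val c.out) x₀ < min δX (ε/32) := by
      intro i g hg he c hc
      have h1 : S16.idist enc (g • p i) y₀ < δ := hborder i g hg he
      rw [hδdef] at h1
      exact S16.dist_out_lt enc c hc h1
    have main : ∀ c' : G ⧸ H, ∃ x : X,
        ∀ (h : H) (c : G ⧸ H), enc c ≤ N → ∀ i : I,
          c.out * (h : G) * (c'.out)⁻¹ ∈ A i →
          dist (h • x) (h • (p i).val c'.out) < ε/8 := by
      intro c'
      set τ := c'.out with hτ
      set B : I → Set H := fun i => {h : H | r₀ * (h : G) * τ⁻¹ ∈ A i} with hB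
      have hpart' : ∀ h : H, ∃! i, h ∈ B i := fun h => hpart (r₀ * (h : G) * τ⁻¹)
      have heval : ∀ (i : I) (h : H) (u : G),
          ((u * (h : G) * τ⁻¹) • (p i)).val u = h • (p i).val τ := by
        intro i h u
        rw [S16.smul_val]
        have harg : (u * (h : G) * τ⁻¹)⁻¹ * u = τ * ((h⁻¹ : H) : G) := by
          push_cast; group
        rw [harg, (p i).prop τ h⁻¹, inv_inv]
      have hborder'' : ∀ i : I, ∀ h ∈ B i, (∃ e ∈ EX, e * h ∉ B i) →
          dist ((h : H) • (p i).val τ) x₀ < δX := by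
        rintro i h hh ⟨e, heEX, heh⟩
        have hme : r₀ * (e : G) * r₀⁻¹ ∈ E := by
          rw [hE]
          exact Finset.mem_union_right _ (Finset.mem_image_of_mem _ heEX)
        have hnot : (r₀ * (e : G) * r₀⁻¹) * (r₀ * (h : G) * τ⁻¹) ∉ A i := by
          have hq : (r₀ * (e : G) * r₀⁻¹) * (r₀ * (h : G) * τ⁻¹)
              = r₀ * ((e * h : H) : G) * τ⁻¹ := by
            push_cast; group
          rw [hq]
          exact heh
        have h4 := hbord' i _ hh ⟨_, hme, hnot⟩ (QuotientGroup.mk 1 : G ⧸ H) hN1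
        rw [← hr₀, heval i h r₀] at h4
        exact lt_of_lt_of_le h4 (min_le_left _ _)
      obtain ⟨x, hx⟩ := hEX I B (fun i => (p i).val τ) hpart' hborder''
      refine ⟨x, ?_⟩
      intro h c hc i hgA
      obtain ⟨i₀, hi₀, huni⟩ := hpart' h
      by_cases hii : i = i₀
      · subst hii
        exact lt_of_lt_of_le (hx i h hi₀) (by linarith)
      · have huniA := hpart (c.out * (h : G) * τ⁻¹)
        have huniA0 := hpart (r₀ * (h : G) * τ⁻¹)
        have hg₀ : r₀ * (h : G) * τ⁻¹ ∈ A i₀ := hi₀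
        have hnot1 : (r₀ * c.out⁻¹) * (c.out * (h : G) * τ⁻¹) ∉ A i := by
          have hq : (r₀ * c.out⁻¹) * (c.out * (h : G) * τ⁻¹) = r₀ * (h : G) * τ⁻¹ := by group
          rw [hq]
          intro hmem
          exact hii (huniA0.unique hmem hg₀)
        have hmemE1 : r₀ * c.out⁻¹ ∈ E := by
          rw [hE]
          exact Finset.mem_union_left _ (Finset.mem_union_left _
            (Finset.mem_image_of_mem _ (hFqmem c hc)))
        have hb1 := hbord' i _ hgA ⟨_, hmemE1, hnot1⟩ c hc
        rw [heval i h c.out] at hb1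
        have hnot2 : (c.out * r₀⁻¹) * (r₀ * (h : G) * τ⁻¹) ∉ A i₀ := by
          have hq : (c.out * r₀⁻¹) * (r₀ * (h : G) * τ⁻¹) = c.out * (h : G) * τ⁻¹ := by group
          rw [hq]
          intro hmem
          exact hii (huniA.unique hgA hmem)
        have hmemE2 : c.out * r₀⁻¹ ∈ E := by
          rw [hE]
          exact Finset.mem_union_left _ (Finset.mem_union_right _
            (Finset.mem_image_of_mem _ (hFqmem c hc)))
        have hb0 := hbord' i₀ _ hg₀ ⟨_, hmemE2, hnot2⟩ (QuotientGroup.mk 1 : G ⧸ H) hN1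
        rw [← hr₀, heval i₀ h r₀] at hb0
        have hx0 := hx i₀ h hi₀
        have hb1' := lt_of_lt_of_le hb1 (min_le_right _ _)
        have hb0' := lt_of_lt_of_le hb0 (min_le_right _ _)
        calc dist ((h : H) • x) (h • (p i).val τ)
            ≤ dist ((h : H) • x) (h • (p i₀).val τ) + dist (h • (p i₀).val τ) x₀
              + dist x₀ (h • (p i).val τ) := dist_triangle4 _ _ _ _
          _ < ε/32 + ε/32 + ε/32 := by
              rw [dist_comm x₀]
              exact add_lt_add (add_lt_add hx0 hb0') hb1'
          _ ≤ ε/8 := by linarith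
    choose xf hxf using main
    refine ⟨S16.asm H X xf, ?_⟩
    intro i g hgA
    show S16.idist enc (g • S16.asm H X xf) (g • p i) < ε
    apply bound _ _ N ε hε hNe
    intro c hc
    set k := g⁻¹ * c.out with hk
    have e1 : (g • S16.asm H X xf).val c.out
        = S16.sig H k • xf (QuotientGroup.mk k) := by
      rw [S16.smul_val, S16.asm_val]
    have e2 : (g • p i).val c.out
        = S16.sig H k • (p i).val ((QuotientGroup.mk k : G ⧸ H)).out := by
      rw [S16.smul_val, S16.eval_eq]
    have e3 : c.out * ((S16.sig H k : H) : G) * (((QuotientGroup.mk k : G ⧸ H)).out)⁻¹ = g := by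
      rw [S16.coe_sig, hk]; group
    rw [e1, e2]
    refine le_trans (hxf (QuotientGroup.mk k) (S16.sig H k) c hc i ?_).le (by linarith)
    rw [e3]
    exact hgA
  -- dense homoclinic points
  have dens : Dense {y : S16.Ind H X | Homoclinic G y₀ y} := by
    rw [Metric.dense_iff]
    intro z r hr
    obtain ⟨N, hN⟩ := S16.exists_pow_half_lt (half_pos hr)
    have hcc : ∀ c : G ⧸ H, ∃ x : X, Homoclinic H x₀ x ∧
        (enc c ≤ N → dist x (z.val c.out) < r/5) ∧ (¬ enc c ≤ N → x = x₀) := by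
      intro c
      by_cases hc : enc c ≤ N
      · obtain ⟨x, hx1, hx2⟩ := Metric.dense_iff.mp hdense (z.val c.out) (r/5) (by positivity)
        exact ⟨x, hx2, fun _ => Metric.mem_ball.mp hx1, fun hh => absurd hc hh⟩
      · refine ⟨x₀, ?_, fun hh => absurd hh hc, fun _ => rfl⟩
        intro ε' hε'
        exact ⟨∅, fun h _ => by rw [hfix]; simpa using hε'⟩
    choose xf hxf1 hxf2 hxf3 using hcc
    set y := S16.asm H X xf with hy
    refine ⟨y, Metric.mem_ball.mpr ?_, ?_⟩
    · show S16.idist enc y z < r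
      apply bound _ _ N r hr hN
      intro c hc
      rw [hy, S16.asm_val_out]
      exact (hxf2 c hc).le
    · show Homoclinic G y₀ y
      intro ε' hε'
      obtain ⟨N', hN'⟩ := S16.exists_pow_half_lt (half_pos hε')
      have hEcx : ∀ c : G ⧸ H, ∃ Ec : Finset H, ∀ h : H, h ∉ Ec →
          dist ((h : H) • xf c) x₀ < ε'/5 :=
        fun c => hxf1 c (ε'/5) (by positivity)
      choose Ec hEc using hEcx
      set F' := (Finset.range (N'+1)).preimage enc (Set.injOn_of_injective enc.injective) with hF'
      set F := (Finset.range (N+1)).preimage enc (Set.injOn_of_injective enc.injective) with hF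
      refine ⟨F'.biUnion (fun c => F.biUnion (fun c' =>
        (Ec c').image (fun h : H => c.out * (h : G) * (c'.out)⁻¹))), ?_⟩
      intro g hg
      show S16.idist enc (g • y) y₀ < ε'
      apply bound _ _ N' ε' hε' hN'
      intro c hc
      set k := g⁻¹ * c.out with hk
      have e1 : (g • y).val c.out = S16.sig H k • xf (QuotientGroup.mk k) := by
        rw [hy, S16.smul_val, S16.asm_val]
      rw [e1, hy0v]
      by_cases hsup : enc (QuotientGroup.mk k : G ⧸ H) ≤ N
      · have hnmem : S16.sig H k ∉ Ec (QuotientGroup.mk k) := by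
          intro hmem
          apply hg
          refine Finset.mem_biUnion.mpr ⟨c, ?_, ?_⟩
          · simp only [hF', Finset.mem_preimage, Finset.mem_range]
            omega
          refine Finset.mem_biUnion.mpr ⟨QuotientGroup.mk k, ?_, ?_⟩
          · simp only [hF, Finset.mem_preimage, Finset.mem_range]
            omega
          refine Finset.mem_image.mpr ⟨S16.sig H k, hmem, ?_⟩
          rw [S16.coe_sig, hk]; group
        exact (hEc (QuotientGroup.mk k) _ hnmem).le
      · rw [hxf3 _ hsup, hfix]
        simp only [dist_self]
        positivity
  -- continuity of the endomorphism
  have Fcont : Continuous Fm := by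
    rw [Metric.continuous_iff]
    intro y ε hε
    obtain ⟨N, hN⟩ := S16.exists_pow_half_lt (half_pos hε)
    have huc := CompactSpace.uniformContinuous_of_continuous hfc
    rw [Metric.uniformContinuous_iff] at huc
    obtain ⟨d, hd, hdd⟩ := huc (ε/5) (by positivity)
    refine ⟨(1/2:ℝ)^N * min 1 d, mul_pos (by positivity) (lt_min one_pos hd), fun z hz => ?_⟩
    have hz2 : S16.idist enc z y < (1/2:ℝ)^N * min 1 d := hz
    show S16.idist enc (Fm z) (Fm y) < ε
    apply bound _ _ N ε hε hN
    intro c hc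
    have h3 := S16.dist_out_lt enc c hc hz2
    exact (hdd h3).le
  -- fixed point of the endomorphism
  have F0 : Fm y₀ = y₀ := by
    ext k
    exact hf0
  -- equivariance
  have Fequiv : ∀ (g : G) (y : S16.Ind H X), Fm (g • y) = g • Fm y := by
    intro g y
    ext k
    rfl
  -- asymptotic nilpotency
  have Fnil : ∀ y : S16.Ind H X,
      Filter.Tendsto (fun n => Fm^[n] y) Filter.atTop (nhds y₀) := by
    intro y
    rw [Metric.tendsto_atTop]
    intro ε hε
    obtain ⟨N, hN⟩ := S16.exists_pow_half_lt (half_pos hε)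
    set F := (Finset.range (N+1)).preimage enc (Set.injOn_of_injective enc.injective) with hF
    have hcoord : ∀ c : G ⧸ H, ∃ n₀ : ℕ, ∀ n ≥ n₀, dist (f^[n] (y.val c.out)) x₀ < ε/5 :=
      fun c => Metric.tendsto_atTop.mp (hfnil (y.val c.out)) (ε/5) (by positivity)
    choose n₀f hn₀f using hcoord
    refine ⟨F.sup n₀f, fun n hn => ?_⟩
    show S16.idist enc (Fm^[n] y) y₀ < ε
    apply bound _ _ N ε hε hN
    intro c hc
    have hcF : c ∈ F := by
      simp only [hF, Finset.mem_preimage, Finset.mem_range]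
      omega
    rw [iter_val, hy0v]
    exact (hn₀f c n (le_trans (Finset.le_sup hcF) hn)).le
  obtain ⟨n, hn⟩ := hG (S16.Ind H X) m compact inferInstance actcont y₀ fixpt expans
    glue dens Fm Fcont F0 Fequiv Fnil
  refine ⟨n, fun x => ?_⟩
  have h1 := hn (S16.asm H X (fun c => if c = (QuotientGroup.mk 1 : G ⧸ H) then x else x₀))
  have h2 : (Fm^[n] (S16.asm H X (fun c => if c = (QuotientGroup.mk 1 : G ⧸ H) then x else x₀))).val
      ((QuotientGroup.mk 1 : G ⧸ H)).out = y₀.val ((QuotientGroup.mk 1 : G ⧸ H)).out := by rw [h1]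
  rw [iter_val, S16.asm_val_out, hy0v] at h2
  simpa using h2
end

section
/- Say a group G is nil-rigid if for every expansive 0-gluing pointed dynamical system (G, X, 0) in which the homoclinic points are dense, every asymptotically nilpotent endomorphism of (G, X, 0) is nilpotent. If a group G has a subgroup H of finite index that is nil-rigid, then G is nil-rigid. -/
/-- Uniform continuity on a compact metric space. -/
lemma aux_unif {X : Type} [MetricSpace X] [CompactSpace X] {c : X → X}
    (hc : Continuous c) {ε : ℝ} (hε : 0 < ε) :
    ∃ δ > 0, ∀ u v : X, dist u v < δ → dist (c u) (c v) < ε := by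
  have h := CompactSpace.uniformContinuous_of_continuous hc
  rw [Metric.uniformContinuous_iff] at h
  exact h ε hε

/-- Simultaneous uniform continuity for a finite family of continuous maps. -/
lemma aux_unif_fin {Q : Type} [Finite Q] [Nonempty Q] {X : Type} [MetricSpace X]
    [CompactSpace X] (c : Q → X → X) (hc : ∀ q, Continuous (c q)) {ε : ℝ} (hε : 0 < ε) :
    ∃ δ > 0, ∀ q u v, dist u v < δ → dist (c q u) (c q v) < ε := by
  classical
  haveI := Fintype.ofFinite Q
  choose D hD hD2 using fun q => aux_unif (hc q) hε
  refine ⟨Finset.univ.inf' Finset.univ_nonempty D, ?_, ?_⟩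
  · rw [gt_iff_lt, Finset.lt_inf'_iff]
    exact fun q _ => hD q
  · intro q u v h
    exact hD2 q u v (lt_of_lt_of_le h (Finset.inf'_le _ (Finset.mem_univ q)))

/-- a group with a nil-rigid subgroup of finite index is nil-rigid. -/
theorem statement17 {G : Type} [Group G] (H : Subgroup G)
    (hfi : H.FiniteIndex) (hH : NilRigid H) :
    NilRigid G := by
  classical
  intro X _ _ _ hcont x₀ hfix hexp hglue hdense f hf hf0 heqv hasymp
  haveI : Finite (G ⧸ H) := inferInstance
  haveI : Fintype (G ⧸ H) := Fintype.ofFinite _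
  -- transversal, normalised at the identity coset
  set r : G ⧸ H → G := fun q => if q = QuotientGroup.mk (1 : G) then 1 else q.out with hr
  have hrmk : ∀ q : G ⧸ H, QuotientGroup.mk (r q) = q := by
    intro q
    by_cases h : q = QuotientGroup.mk (1 : G)
    · rw [hr]; simp only [h, if_pos]
    · simp [hr, h, QuotientGroup.out_eq']
  -- the "H-part" of an element of G
  have hπmem : ∀ g : G, (r (QuotientGroup.mk g))⁻¹ * g ∈ H := by
    intro g
    rw [← QuotientGroup.eq]
    exact hrmk _
  set π : G → H := fun g => ⟨(r (QuotientGroup.mk g))⁻¹ * g, hπmem g⟩ with hπ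
  have hdecomp : ∀ g : G, r (QuotientGroup.mk g) * ((π g : G)) = g := by
    intro g; simp [hπ, mul_inv_cancel_left]
  have hπH : ∀ h : H, π (h : G) = h := by
    intro h
    have h1 : (QuotientGroup.mk (h : G) : G ⧸ H) = QuotientGroup.mk (1 : G) := by
      rw [QuotientGroup.eq]
      simpa using h.2
    apply Subtype.ext
    simp [hπ, h1, hr]
  have hπshift : ∀ (g : G) (h : H), π (g * h) = π g * h := by
    intro g h
    have h1 : (QuotientGroup.mk (g * h) : G ⧸ H) = QuotientGroup.mk g := by
      rw [QuotientGroup.eq]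
      simpa [mul_assoc] using h.2
    apply Subtype.ext
    simp [hπ, h1, mul_assoc]
  -- the H-action on X
  have hsmul : ∀ (h : H) (x : X), h • x = (h : G) • x := fun _ _ => rfl
  -- continuity of the transversal maps
  have hrc : ∀ q : G ⧸ H, Continuous fun x : X => r q • x := fun q => hcont (r q)
  -- expansivity for H
  obtain ⟨Δ, hΔ, hΔexp⟩ := hexp
  obtain ⟨Δ', hΔ', hΔ'2⟩ := aux_unif_fin (fun q (x : X) => r q • x) hrc hΔ
  have hexpH : ∃ Δ₀ : ℝ, 0 < Δ₀ ∧ ∀ x y : X,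
      (∀ h : H, dist (h • x) (h • y) ≤ Δ₀) → x = y := by
    refine ⟨Δ' / 2, by positivity, ?_⟩
    intro x y hxy
    apply hΔexp x y
    intro g
    have h1 : dist ((π g : G) • x) ((π g : G) • y) < Δ' :=
      lt_of_le_of_lt (hxy (π g)) (by linarith)
    have := le_of_lt (hΔ'2 (QuotientGroup.mk g) _ _ h1)
    calc dist (g • x) (g • y)
        = dist (r (QuotientGroup.mk g) • ((π g : G) • x))
            (r (QuotientGroup.mk g) • ((π g : G) • y)) := by
          rw [← mul_smul, ← mul_smul, hdecomp]
      _ ≤ Δ := this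
  -- 0-gluing for H
  have hglueH : ZeroGluing H x₀ := by
    intro ε hε
    obtain ⟨δ, hδ, E, hE⟩ := hglue ε hε
    obtain ⟨δ', hδ', hδ'2⟩ := aux_unif_fin (fun q (x : X) => r q • x) hrc hδ
    refine ⟨δ', hδ', ?_⟩
    refine ⟨(E ×ˢ (Finset.univ : Finset (G ⧸ H))).image (fun p => π (p.1 * r p.2)), ?_⟩
    intro I A p hpart hborder
    -- build the G-designation
    set B : I → Set G := fun i => {g : G | π g ∈ A i} with hB
    have hBpart : ∀ g : G, ∃! i : I, g ∈ B i := fun g => hpart (π g)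
    have hBborder : ∀ i : I, ∀ g ∈ B i, (∃ e ∈ E, e * g ∉ B i) →
        dist (g • p i) x₀ < δ := by
      intro i g hg ⟨e, heE, hout⟩
      have hsplit : π (e * g) = π (e * r (QuotientGroup.mk g)) * π g := by
        conv_lhs => rw [← hdecomp g, ← mul_assoc]
        exact hπshift _ _
      have hkey : π (e * r (QuotientGroup.mk g)) * π g ∉ A i := by
        intro hmem
        apply hout
        show π (e * g) ∈ A i
        rw [hsplit]
        exact hmem
      have hb : dist ((π g : G) • p i) x₀ < δ' := by
        have := hborder i (π g) hg
          ⟨π (e * r (QuotientGroup.mk g)),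
            Finset.mem_image.mpr ⟨(e, QuotientGroup.mk g),
              Finset.mem_product.mpr ⟨heE, Finset.mem_univ _⟩, rfl⟩, hkey⟩
        exact this
      have hfixr : r (QuotientGroup.mk g) • x₀ = x₀ := hfix _
      calc dist (g • p i) x₀
          = dist (r (QuotientGroup.mk g) • ((π g : G) • p i))
              (r (QuotientGroup.mk g) • x₀) := by
            rw [← mul_smul, hdecomp, hfixr]
        _ < δ := hδ'2 (QuotientGroup.mk g) _ _ (by simpa [hfixr] using hb)
    obtain ⟨y, hy⟩ := hE I B p hBpart hBborder
    refine ⟨y, ?_⟩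
    intro i h hhi
    have : (h : G) ∈ B i := by
      rw [hB]
      simp only [Set.mem_setOf_eq, hπH]
      exact hhi
    exact hy i (h : G) this
  -- density of H-homoclinic points
  have hdenseH : Dense {x : X | Homoclinic H x₀ x} := by
    apply hdense.mono
    intro x hx
    intro ε hε
    obtain ⟨E, hEx⟩ := hx ε hε
    refine ⟨E.preimage (fun h : H => (h : G)) (Subtype.coe_injective.injOn), ?_⟩
    intro h hh
    have : (h : G) ∉ E := fun hc => hh (Finset.mem_preimage.mpr hc)
    exact hEx _ this
  exact hH X inferInstance inferInstance inferInstance (fun h => hcont (h : G)) x₀ (fun h => hfix (h : G)) hexpH hglueH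
    hdenseH f hf hf0 (fun h x => heqv (h : G) x) hasymp
end
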